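/- The formal power series B(T) = Σ_{n≥0} ((6n+1)/(6n-1)) * (6n)!/((3n)!(2n)!) * T^n in ℚ[[T]] satisfies the differential equation 432·T²·B''(T) + (864·T - 1)·B'(T) - 84·B(T) = 0, where derivatives are formal derivatives of power series. -/

import Mathlib

/-- `a n = (6n)! / ((3n)! (2n)!)`, as a rational number. -/
noncomputable def pixtonA (n : ℕ) : ℚ :=
  (Nat.factorial (6 * n) : ℚ) / ((Nat.factorial (3 * n) : ℚ) * (Nat.factorial (2 * n) : ℚ))

/-- `b n = ((6n+1)/(6n-1)) * a n`. -/
noncomputable def pixtonB (n : ℕ) : ℚ :=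
  ((6 * (n : ℚ) + 1) / (6 * (n : ℚ) - 1)) * pixtonA n

/-- The power series `B(T)`. -/
noncomputable def seriesB : PowerSeries ℚ := PowerSeries.mk pixtonB

/-- The recurrence `(n+1) a(n+1) = 12 (6n+5)(6n+1) a n`. -/
lemma pixtonA_rec (n : ℕ) :
    ((n : ℚ) + 1) * pixtonA (n + 1) = 12 * (6 * (n : ℚ) + 5) * (6 * (n : ℚ) + 1) * pixtonA n := by
  have e6 : ((Nat.factorial (6 * (n + 1)) : ℚ)) =
      (6*(n:ℚ)+6)*(6*n+5)*(6*n+4)*(6*n+3)*(6*n+2)*(6*n+1) * Nat.factorial (6*n) := by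
    rw [show 6*(n+1) = 6*n+5+1 by ring, Nat.factorial_succ,
        show 6*n+5 = 6*n+4+1 by ring, Nat.factorial_succ,
        show 6*n+4 = 6*n+3+1 by ring, Nat.factorial_succ,
        show 6*n+3 = 6*n+2+1 by ring, Nat.factorial_succ,
        show 6*n+2 = 6*n+1+1 by ring, Nat.factorial_succ,
        show 6*n+1 = 6*n+0+1 by ring, Nat.factorial_succ]
    push_cast; ring
  have e3 : ((Nat.factorial (3 * (n + 1)) : ℚ)) =
      (3*(n:ℚ)+3)*(3*n+2)*(3*n+1) * Nat.factorial (3*n) := by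
    rw [show 3*(n+1) = 3*n+2+1 by ring, Nat.factorial_succ,
        show 3*n+2 = 3*n+1+1 by ring, Nat.factorial_succ,
        show 3*n+1 = 3*n+0+1 by ring, Nat.factorial_succ]
    push_cast; ring
  have e2 : ((Nat.factorial (2 * (n + 1)) : ℚ)) =
      (2*(n:ℚ)+2)*(2*n+1) * Nat.factorial (2*n) := by
    rw [show 2*(n+1) = 2*n+1+1 by ring, Nat.factorial_succ,
        show 2*n+1 = 2*n+0+1 by ring, Nat.factorial_succ]
    push_cast; ring
  have hB : ((Nat.factorial (3*(n+1)) : ℚ)) * (Nat.factorial (2*(n+1)) : ℚ) ≠ 0 :=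
    mul_ne_zero (by exact_mod_cast (Nat.factorial_pos _).ne')
      (by exact_mod_cast (Nat.factorial_pos _).ne')
  have hD : ((Nat.factorial (3*n) : ℚ)) * (Nat.factorial (2*n) : ℚ) ≠ 0 :=
    mul_ne_zero (by exact_mod_cast (Nat.factorial_pos _).ne')
      (by exact_mod_cast (Nat.factorial_pos _).ne')
  unfold pixtonA
  rw [← mul_div_assoc, ← mul_div_assoc, div_eq_div_iff hB hD, e6, e3, e2]
  ring

/-- The recurrence `(n+1) b(n+1) = 12 (6n+7)(6n-1) b n = (432 n² + 432 n - 84) b n`. -/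
lemma pixton_rec (n : ℕ) :
    ((n : ℚ) + 1) * pixtonB (n + 1) = (432 * (n : ℚ) ^ 2 + 432 * n - 84) * pixtonB n := by
  have hA := pixtonA_rec n
  have hm1 : (6 * (n : ℚ) - 1) ≠ 0 := by
    intro h
    have h1 : ((6 * n : ℕ) : ℚ) = 1 := by push_cast; linarith
    have : (6 * n : ℕ) = 1 := by exact_mod_cast h1
    omega
  have hn0 : (0:ℚ) ≤ (n:ℚ) := Nat.cast_nonneg n
  have hp5 : (6 * ((n : ℚ) + 1) - 1) ≠ 0 := by
    have : (0:ℚ) < 6 * ((n : ℚ) + 1) - 1 := by linarith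
    exact this.ne'
  unfold pixtonB
  push_cast
  rw [div_mul_eq_mul_div, div_mul_eq_mul_div, ← mul_div_assoc, ← mul_div_assoc,
      div_eq_div_iff hp5 hm1]
  linear_combination (6*(n:ℚ)+7)*(6*(n:ℚ)-1) * hA

open PowerSeries in
theorem seriesB_ODE :
    432 * X ^ 2 * derivativeFun (derivativeFun seriesB)
      + (864 * X - 1) * derivativeFun seriesB - 84 * seriesB = 0 := by
  ext n
  rw [map_zero]
  have h : 432 * X ^ 2 * derivativeFun (derivativeFun seriesB)
      + (864 * X - 1) * derivativeFun seriesB - 84 * seriesB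
      = (C (R := ℚ) 432 * derivativeFun (derivativeFun seriesB)) * X ^ 2
        + (C (R := ℚ) 864 * derivativeFun seriesB) * X ^ 1
        - derivativeFun seriesB - C (R := ℚ) 84 * seriesB := by
    rw [map_ofNat, map_ofNat, map_ofNat]; ring
  rw [h, map_sub, map_sub, map_add, coeff_mul_X_pow', coeff_mul_X_pow',
      coeff_C_mul, coeff_C_mul, coeff_C_mul]
  simp only [show ∀ f : PowerSeries ℚ, derivativeFun f = derivative ℚ f from fun _ => rfl,
    coeff_derivativeFun, seriesB, coeff_mk]
  rcases n with _ | _ | m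
  · norm_num
    have := pixton_rec 0
    push_cast at this ⊢
    linarith
  · norm_num
    have := pixton_rec 1
    push_cast at this ⊢
    linarith
  · have h2 : 2 ≤ m + 2 := by omega
    have h1 : 1 ≤ m + 2 := by omega
    rw [if_pos h2, if_pos h1]
    have ea : m + 1 + 1 = m + 2 := by omega
    have eb : m + 1 + 1 + 1 = m + 3 := by omega
    have ec : m + 2 + 1 = m + 3 := by omega
    have k1 := pixton_rec (m + 2)
    rw [ec] at k1
    simp only [ea, eb, Nat.add_sub_cancel]
    norm_num
    push_cast at k1 ⊢
    linear_combination -k1
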